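/- Let n ≥ 2, N = 2^n, let p : {0,…,N−1} → ℝ satisfy p_i ≥ 0 and Σ_i p_i = 1, and define the marginals p^k_j (0 ≤ k ≤ n, 0 ≤ j < 2^k) by p^n = p and p^k_j = p^{k+1}_{2j} + p^{k+1}_{2j+1}, and the angles α^k_j = arccos √(p^{k+1}_{2j}/p^k_j) when p^k_j > 0 and α^k_j = 0 when p^k_j = 0 (so p^0_0 = 1). Let t ≥ 1 be an integer and let α̃^k_j ∈ ℝ satisfy α̃^0_0 = α^0_0 and |α̃^k_j − α^k_j| ≤ π/2^{t−1} for all 1 ≤ k ≤ n−1 and 0 ≤ j < 2^k. Define x̃^1 = (cos α̃^0_0, sin α̃^0_0) ∈ ℝ^2 and recursively x̃^{k+1}_{2j} = x̃^k_j cos α̃^k_j, x̃^{k+1}_{2j+1} = x̃^k_j sin α̃^k_j for 1 ≤ k ≤ n−1. Then the Euclidean distance between x̃^n and the vector x_R = (√p_0, …, √p_{N−1}) satisfies ‖x_R − x̃^n‖ ≤ (n−1)√2·π/2^{t−1}. In particular, for every ε > 0, if t = ⌈log₂((n−1)√2·π/ε)⌉ + 1 then ‖x_R − x̃^n‖ ≤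 ε. -/

import Mathlib

/-- The index `2j : Fin (2^(k+1))` of an index `j : Fin (2^k)`. -/
def dbl {k : ℕ} (j : Fin (2 ^ k)) : Fin (2 ^ (k + 1)) :=
  ⟨2 * j.val, by have := j.isLt; simp only [pow_succ]; omega⟩

/-- The index `2j+1 : Fin (2^(k+1))` of an index `j : Fin (2^k)`. -/
def dbl1 {k : ℕ} (j : Fin (2 ^ k)) : Fin (2 ^ (k + 1)) :=
  ⟨2 * j.val + 1, by have := j.isLt; simp only [pow_succ]; omega⟩

lemma range_split (N : ℕ) (g : ℕ → ℝ) :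
    ∑ i ∈ Finset.range (2 * N), g i = ∑ j ∈ Finset.range N, (g (2 * j) + g (2 * j + 1)) := by
  induction N with
  | zero => simp
  | succ m ih =>
    have h2 : 2 * (m + 1) = (2 * m + 1) + 1 := by ring
    rw [h2, Finset.sum_range_succ, Finset.sum_range_succ, Finset.sum_range_succ, ih]
    ring

lemma sum_split {k : ℕ} (f : Fin (2 ^ (k + 1)) → ℝ) :
    ∑ i, f i = ∑ j : Fin (2 ^ k), (f (dbl j) + f (dbl1 j)) := by
  classical
  set g : ℕ → ℝ := fun i => if h : i < 2 ^ (k + 1) then f ⟨i, h⟩ else 0 with hg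
  have h1 : ∑ i : Fin (2 ^ (k + 1)), f i = ∑ i ∈ Finset.range (2 ^ (k + 1)), g i := by
    rw [← Fin.sum_univ_eq_sum_range]
    exact Finset.sum_congr rfl fun i _ => by simp [hg, i.isLt]
  have h2 : (2:ℕ) ^ (k + 1) = 2 * 2 ^ k := by ring
  rw [h1, h2, range_split]
  rw [← Fin.sum_univ_eq_sum_range (fun j => g (2 * j) + g (2 * j + 1)) (2 ^ k)]
  refine Finset.sum_congr rfl fun j _ => ?_
  have hj := j.isLt
  have e1 : 2 * j.val < 2 ^ (k + 1) := by simp only [pow_succ]; omega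
  have e2 : 2 * j.val + 1 < 2 ^ (k + 1) := by simp only [pow_succ]; omega
  simp only [hg]
  rw [dif_pos e1, dif_pos e2]
  rfl

lemma sum_split_one (f : Fin (2 ^ 1) → ℝ) :
    ∑ i, f i = f (dbl (0 : Fin (2 ^ 0))) + f (dbl1 (0 : Fin (2 ^ 0))) := by
  haveI : Subsingleton (Fin (2 ^ 0)) := by rw [pow_zero]; infer_instance
  exact (sum_split f).trans (Fintype.sum_subsingleton _ 0)

lemma l2_triangle {m : ℕ} (v w : Fin m → ℝ) :
    Real.sqrt (∑ i, (v i + w i) ^ 2) ≤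
      Real.sqrt (∑ i, (v i) ^ 2) + Real.sqrt (∑ i, (w i) ^ 2) := by
  let V : EuclideanSpace ℝ (Fin m) := WithLp.toLp 2 v
  let W : EuclideanSpace ℝ (Fin m) := WithLp.toLp 2 w
  have h := norm_add_le V W
  simp only [EuclideanSpace.norm_eq, Real.norm_eq_abs, sq_abs] at h
  simpa [V, W] using h

lemma abs_sin_sub_sin_le (a b : ℝ) : |Real.sin a - Real.sin b| ≤ |a - b| := by
  rw [Real.sin_sub_sin, abs_mul, abs_mul]
  have h1 : |Real.sin ((a - b) / 2)| ≤ |(a - b) / 2| := Real.abs_sin_le_abs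
  have h2 : |Real.cos ((a + b) / 2)| ≤ 1 := Real.abs_cos_le_one _
  have h3 : |(a - b) / 2| = |a - b| / 2 := by rw [abs_div]; norm_num
  have h4 : (0:ℝ) ≤ |Real.sin ((a - b) / 2)| := abs_nonneg _
  rw [h3] at h1
  have h5 : |(2 : ℝ)| = 2 := by norm_num
  rw [h5]
  nlinarith [abs_nonneg (a - b), abs_nonneg (Real.cos ((a + b) / 2))]

lemma abs_cos_sub_cos_le (a b : ℝ) : |Real.cos a - Real.cos b| ≤ |a - b| := by
  rw [Real.cos_sub_cos, abs_mul, abs_mul]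
  have h1 : |Real.sin ((a - b) / 2)| ≤ |(a - b) / 2| := Real.abs_sin_le_abs
  have h2 : |Real.sin ((a + b) / 2)| ≤ 1 := Real.abs_sin_le_one _
  have h3 : |(a - b) / 2| = |a - b| / 2 := by rw [abs_div]; norm_num
  have h4 : (0:ℝ) ≤ |Real.sin ((a - b) / 2)| := abs_nonneg _
  rw [h3] at h1
  have h5 : |(-2 : ℝ)| = 2 := by norm_num
  rw [h5]
  nlinarith [abs_nonneg (a - b), abs_nonneg (Real.sin ((a + b) / 2))]

lemma trig_bound (a b : ℝ) :
    (Real.cos a - Real.cos b) ^ 2 + (Real.sin a - Real.sin b) ^ 2 ≤ 2 * (a - b) ^ 2 := by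
  have hc := abs_cos_sub_cos_le a b
  have hs := abs_sin_sub_sin_le a b
  have h1 : (Real.cos a - Real.cos b) ^ 2 ≤ (a - b) ^ 2 := by
    rw [← sq_abs (Real.cos a - Real.cos b), ← sq_abs (a - b)]
    exact pow_le_pow_left₀ (abs_nonneg _) hc 2
  have h2 : (Real.sin a - Real.sin b) ^ 2 ≤ (a - b) ^ 2 := by
    rw [← sq_abs (Real.sin a - Real.sin b), ← sq_abs (a - b)]
    exact pow_le_pow_left₀ (abs_nonneg _) hs 2
  linarith

/-- Fidelity bound for the deterministic state-preparation algorithm.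
Given a probability vector `p` on `{0,…,2^n−1}` with marginals
`p^k_j = p^{k+1}_{2j} + p^{k+1}_{2j+1}`, angles
`α^k_j = arccos √(p^{k+1}_{2j}/p^k_j)` (set to `0` when `p^k_j = 0`),
`t`-bit approximate angles `α̃^k_j` with `|α̃^k_j − α^k_j| ≤ π/2^{t−1}`, and
the iteratively constructed vector `x̃^n`, the Euclidean distance to the
target amplitude vector `x_R = (√p_0,…,√p_{2^n−1})` is at most
`(n−1)√2·π/2^{t−1}`; in particular it is at most `ε` for
`t = ⌈log₂((n−1)√2·π/ε)⌉ + 1`. -/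
theorem deterministic_fidelity (n t : ℕ) (hn : 2 ≤ n) (ht : 1 ≤ t)
    (p : Fin (2 ^ n) → ℝ) (hp0 : ∀ i, 0 ≤ p i) (hp1 : ∑ i, p i = 1)
    (pm : ∀ k : ℕ, Fin (2 ^ k) → ℝ)
    (hpmn : pm n = p)
    (hpm : ∀ k, k < n → ∀ j : Fin (2 ^ k),
      pm k j = pm (k + 1) (dbl j) + pm (k + 1) (dbl1 j))
    (α : ∀ k : ℕ, Fin (2 ^ k) → ℝ)
    (hα : ∀ k, k < n → ∀ j : Fin (2 ^ k),
      (0 < pm k j →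
        α k j = Real.arccos (Real.sqrt (pm (k + 1) (dbl j) / pm k j))) ∧
      (pm k j = 0 → α k j = 0))
    (αt : ∀ k : ℕ, Fin (2 ^ k) → ℝ)
    (hαt0 : αt 0 = α 0)
    (hαt : ∀ k, 1 ≤ k → k ≤ n - 1 → ∀ j : Fin (2 ^ k),
      |αt k j - α k j| ≤ Real.pi / 2 ^ (t - 1))
    (xt : ∀ k : ℕ, Fin (2 ^ k) → ℝ)
    (hxt1 : ∀ j : Fin (2 ^ 1),
      xt 1 j = if j.val = 0 then Real.cos (αt 0 0) else Real.sin (αt 0 0))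
    (hxtrec : ∀ k, 1 ≤ k → k ≤ n - 1 → ∀ j : Fin (2 ^ k),
      xt (k + 1) (dbl j) = xt k j * Real.cos (αt k j) ∧
      xt (k + 1) (dbl1 j) = xt k j * Real.sin (αt k j)) :
    Real.sqrt (∑ i, (Real.sqrt (p i) - xt n i) ^ 2) ≤
      ((n : ℝ) - 1) * Real.sqrt 2 * Real.pi / 2 ^ (t - 1) ∧
    ∀ ε : ℝ, 0 < ε →
      (t : ℤ) = ⌈Real.logb 2 (((n : ℝ) - 1) * Real.sqrt 2 * Real.pi / ε)⌉ + 1 →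
      Real.sqrt (∑ i, (Real.sqrt (p i) - xt n i) ^ 2) ≤ ε := by
  -- nonnegativity of the marginals
  have hnonneg : ∀ k, k ≤ n → ∀ j, 0 ≤ pm k j := by
    have key : ∀ m k, k ≤ n → n - k = m → ∀ j : Fin (2 ^ k), 0 ≤ pm k j := by
      intro m
      induction m with
      | zero =>
        intro k hk hm j
        have hkn : k = n := by omega
        subst hkn
        rw [hpmn]; exact hp0 j
      | succ m ih =>
        intro k hk hm j
        have hkn : k < n := by omega
        rw [hpm k hkn j]
        have a := ih (k + 1) (by omega) (by omega) (dbl j)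
        have b := ih (k + 1) (by omega) (by omega) (dbl1 j)
        linarith
    exact fun k hk => key (n - k) k hk rfl
  -- total mass of the marginals
  have hsum : ∀ k, k ≤ n → ∑ j, pm k j = 1 := by
    have key : ∀ m k, k ≤ n → n - k = m → ∑ j, pm k j = 1 := by
      intro m
      induction m with
      | zero =>
        intro k hk hm
        have hkn : k = n := by omega
        subst hkn
        rw [hpmn]; exact hp1
      | succ m ih =>
        intro k hk hm
        have hkn : k < n := by omega
        calc ∑ j, pm k j
            = ∑ j : Fin (2 ^ k), (pm (k + 1) (dbl j) + pm (k + 1) (dbl1 j)) :=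
              Finset.sum_congr rfl fun j _ => hpm k hkn j
          _ = ∑ i, pm (k + 1) i := (sum_split _).symm
          _ = 1 := ih (k + 1) (by omega) (by omega)
    exact fun k hk => key (n - k) k hk rfl
  haveI hss : Subsingleton (Fin (2 ^ 0)) := by rw [pow_zero]; infer_instance
  have pm00 : pm 0 0 = 1 := by
    have h := hsum 0 (by omega)
    rwa [Fintype.sum_subsingleton _ (0 : Fin (2 ^ 0))] at h
  -- the exact recursion for the square roots of the marginals
  have hrec_exact : ∀ k, k < n → ∀ j : Fin (2 ^ k),
      Real.sqrt (pm (k + 1) (dbl j)) = Real.sqrt (pm k j) * Real.cos (α k j) ∧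
      Real.sqrt (pm (k + 1) (dbl1 j)) = Real.sqrt (pm k j) * Real.sin (α k j) := by
    intro k hk j
    have hd := hpm k hk j
    have h0 : 0 ≤ pm (k + 1) (dbl j) := hnonneg (k + 1) (by omega) _
    have h1 : 0 ≤ pm (k + 1) (dbl1 j) := hnonneg (k + 1) (by omega) _
    rcases (hnonneg k (le_of_lt hk) j).lt_or_eq with hpos | hzero
    · have hne := hpos.ne'
      have hq0 : 0 ≤ pm (k + 1) (dbl j) / pm k j := div_nonneg h0 hpos.le
      have hq1 : pm (k + 1) (dbl j) / pm k j ≤ 1 := (div_le_one hpos).2 (by linarith)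
      have hα1 := (hα k hk j).1 hpos
      have hs0 : (0:ℝ) ≤ Real.sqrt (pm (k + 1) (dbl j) / pm k j) := Real.sqrt_nonneg _
      have hs1 : Real.sqrt (pm (k + 1) (dbl j) / pm k j) ≤ 1 := Real.sqrt_le_one.2 hq1
      constructor
      · rw [hα1, Real.cos_arccos (by linarith) hs1, ← Real.sqrt_mul hpos.le]
        congr 1
        field_simp
      · rw [hα1, Real.sin_arccos, Real.sq_sqrt hq0]
        have he : 1 - pm (k + 1) (dbl j) / pm k j = pm (k + 1) (dbl1 j) / pm k j := by
          field_simp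
          linarith
        rw [he, ← Real.sqrt_mul hpos.le]
        congr 1
        field_simp
    · have hz : pm k j = 0 := hzero.symm
      have hz0 : pm (k + 1) (dbl j) = 0 := by linarith
      have hz1 : pm (k + 1) (dbl1 j) = 0 := by linarith
      rw [hz, hz0, hz1, (hα k hk j).2 hz]
      simp
  -- the produced vectors have unit norm
  have hxtnorm : ∀ k, 1 ≤ k → k ≤ n → ∑ j, (xt k j) ^ 2 = 1 := by
    intro k hk1
    induction k, hk1 using Nat.le_induction with
    | base =>
      intro _
      rw [sum_split_one (fun i => (xt 1 i) ^ 2)]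
      rw [hxt1, hxt1]
      have e0 : (dbl (0 : Fin (2 ^ 0))).val = 0 := rfl
      have e1 : (dbl1 (0 : Fin (2 ^ 0))).val = 1 := rfl
      rw [e0, e1]
      simp [Real.cos_sq_add_sin_sq]
    | succ k hk ih =>
      intro hk1n
      rw [sum_split (fun i => (xt (k + 1) i) ^ 2)]
      have hrec := hxtrec k hk (by omega)
      calc ∑ j : Fin (2 ^ k), ((xt (k + 1) (dbl j)) ^ 2 + (xt (k + 1) (dbl1 j)) ^ 2)
          = ∑ j : Fin (2 ^ k), (xt k j) ^ 2 := by
            refine Finset.sum_congr rfl fun j _ => ?_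
            rw [(hrec j).1, (hrec j).2]
            have hiden : (xt k j * Real.cos (αt k j)) ^ 2 + (xt k j * Real.sin (αt k j)) ^ 2
                = (xt k j) ^ 2 * (Real.sin (αt k j) ^ 2 + Real.cos (αt k j) ^ 2) := by ring
            rw [hiden, Real.sin_sq_add_cos_sq, mul_one]
        _ = 1 := ih (by omega)
  obtain ⟨δ, hδdef⟩ : ∃ δ : ℝ, δ = Real.pi / 2 ^ (t - 1) := ⟨_, rfl⟩
  have hδ : 0 ≤ δ := by rw [hδdef]; positivity
  -- one step of the error estimate
  have hstep : ∀ k, 1 ≤ k → k + 1 ≤ n →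
      Real.sqrt (∑ i, (Real.sqrt (pm (k + 1) i) - xt (k + 1) i) ^ 2) ≤
        Real.sqrt (∑ j, (Real.sqrt (pm k j) - xt k j) ^ 2) + Real.sqrt 2 * δ := by
    intro k hk1 hkn
    have hhalf : ∀ i : Fin (2 ^ (k + 1)), i.val / 2 < 2 ^ k := by
      intro i
      have := i.isLt
      simp only [pow_succ] at this
      omega
    obtain ⟨v, hv⟩ : ∃ v : Fin (2 ^ (k + 1)) → ℝ, ∀ i, v i =
        (Real.sqrt (pm k ⟨i.val / 2, hhalf i⟩) - xt k ⟨i.val / 2, hhalf i⟩) *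
          (if i.val % 2 = 0 then Real.cos (α k ⟨i.val / 2, hhalf i⟩)
           else Real.sin (α k ⟨i.val / 2, hhalf i⟩)) := ⟨_, fun i => rfl⟩
    obtain ⟨w, hw⟩ : ∃ w : Fin (2 ^ (k + 1)) → ℝ, ∀ i, w i =
        xt k ⟨i.val / 2, hhalf i⟩ *
          ((if i.val % 2 = 0 then Real.cos (α k ⟨i.val / 2, hhalf i⟩)
            else Real.sin (α k ⟨i.val / 2, hhalf i⟩)) -
           (if i.val % 2 = 0 then Real.cos (αt k ⟨i.val / 2, hhalf i⟩)
            else Real.sin (αt k ⟨i.val / 2, hhalf i⟩))) := ⟨_, fun i => rfl⟩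
    have hjd : ∀ j : Fin (2 ^ k), (⟨(dbl j).val / 2, hhalf (dbl j)⟩ : Fin (2 ^ k)) = j := by
      intro j; apply Fin.ext; simp [dbl]
    have hjd1 : ∀ j : Fin (2 ^ k), (⟨(dbl1 j).val / 2, hhalf (dbl1 j)⟩ : Fin (2 ^ k)) = j := by
      intro j; apply Fin.ext; simp [dbl1]; omega
    have hm0 : ∀ j : Fin (2 ^ k), (dbl j).val % 2 = 0 := by
      intro j; simp [dbl]
    have hm1 : ∀ j : Fin (2 ^ k), ¬((dbl1 j).val % 2 = 0) := by
      intro j; simp [dbl1]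
    have hvd : ∀ j : Fin (2 ^ k),
        v (dbl j) = (Real.sqrt (pm k j) - xt k j) * Real.cos (α k j) := by
      intro j; rw [hv (dbl j), hjd j, if_pos (hm0 j)]
    have hvd1 : ∀ j : Fin (2 ^ k),
        v (dbl1 j) = (Real.sqrt (pm k j) - xt k j) * Real.sin (α k j) := by
      intro j; rw [hv (dbl1 j), hjd1 j, if_neg (hm1 j)]
    have hwd : ∀ j : Fin (2 ^ k),
        w (dbl j) = xt k j * (Real.cos (α k j) - Real.cos (αt k j)) := by
      intro j; rw [hw (dbl j), hjd j, if_pos (hm0 j), if_pos (hm0 j)]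
    have hwd1 : ∀ j : Fin (2 ^ k),
        w (dbl1 j) = xt k j * (Real.sin (α k j) - Real.sin (αt k j)) := by
      intro j; rw [hw (dbl1 j), hjd1 j, if_neg (hm1 j), if_neg (hm1 j)]
    have hvw : ∀ i : Fin (2 ^ (k + 1)),
        Real.sqrt (pm (k + 1) i) - xt (k + 1) i = v i + w i := by
      intro i
      have hlt := hhalf i
      rcases Nat.even_or_odd i.val with he | ho
      · have hm : i.val % 2 = 0 := Nat.even_iff.mp he
        have hi : i = dbl (⟨i.val / 2, hlt⟩ : Fin (2 ^ k)) := by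
          apply Fin.ext; simp [dbl]; omega
        rw [hi, (hrec_exact k (by omega) _).1, (hxtrec k hk1 (by omega) _).1,
          hvd _, hwd _]
        ring
      · have hm : i.val % 2 = 1 := Nat.odd_iff.mp ho
        have hi : i = dbl1 (⟨i.val / 2, hlt⟩ : Fin (2 ^ k)) := by
          apply Fin.ext; simp [dbl1]; omega
        rw [hi, (hrec_exact k (by omega) _).2, (hxtrec k hk1 (by omega) _).2,
          hvd1 _, hwd1 _]
        ring
    have hsum1 : ∑ i, (Real.sqrt (pm (k + 1) i) - xt (k + 1) i) ^ 2
        = ∑ i, (v i + w i) ^ 2 :=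
      Finset.sum_congr rfl fun i _ => by rw [hvw i]
    rw [hsum1]
    refine le_trans (l2_triangle v w) ?_
    have hvsum : ∑ i, (v i) ^ 2 = ∑ j, (Real.sqrt (pm k j) - xt k j) ^ 2 := by
      rw [sum_split (fun i => (v i) ^ 2)]
      refine Finset.sum_congr rfl fun j _ => ?_
      rw [hvd j, hvd1 j]
      have hiden : ((Real.sqrt (pm k j) - xt k j) * Real.cos (α k j)) ^ 2 +
          ((Real.sqrt (pm k j) - xt k j) * Real.sin (α k j)) ^ 2
          = (Real.sqrt (pm k j) - xt k j) ^ 2 *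
              (Real.sin (α k j) ^ 2 + Real.cos (α k j) ^ 2) := by ring
      rw [hiden, Real.sin_sq_add_cos_sq, mul_one]
    have hwsum : ∑ i, (w i) ^ 2 ≤ 2 * δ ^ 2 := by
      rw [sum_split (fun i => (w i) ^ 2)]
      have hterm : ∀ j : Fin (2 ^ k),
          (w (dbl j)) ^ 2 + (w (dbl1 j)) ^ 2 ≤ (xt k j) ^ 2 * (2 * δ ^ 2) := by
        intro j
        rw [hwd j, hwd1 j]
        have hab := hαt k hk1 (by omega) j
        rw [← hδdef] at hab
        have h2 : (αt k j - α k j) ^ 2 ≤ δ ^ 2 := by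
          rw [← sq_abs (αt k j - α k j)]
          exact pow_le_pow_left₀ (abs_nonneg _) hab 2
        have htb := trig_bound (α k j) (αt k j)
        have hx2 : (0:ℝ) ≤ (xt k j) ^ 2 := sq_nonneg _
        nlinarith [mul_le_mul_of_nonneg_left htb hx2, mul_le_mul_of_nonneg_left h2 hx2]
      calc ∑ j : Fin (2 ^ k), ((w (dbl j)) ^ 2 + (w (dbl1 j)) ^ 2)
          ≤ ∑ j : Fin (2 ^ k), (xt k j) ^ 2 * (2 * δ ^ 2) :=
            Finset.sum_le_sum fun j _ => hterm j
        _ = (∑ j : Fin (2 ^ k), (xt k j) ^ 2) * (2 * δ ^ 2) := by rw [← Finset.sum_mul]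
        _ = 2 * δ ^ 2 := by rw [hxtnorm k hk1 (by omega), one_mul]
    have hwb : Real.sqrt (∑ i, (w i) ^ 2) ≤ Real.sqrt 2 * δ := by
      refine le_trans (Real.sqrt_le_sqrt hwsum) ?_
      rw [Real.sqrt_mul (by norm_num : (0:ℝ) ≤ 2), Real.sqrt_sq hδ]
    rw [hvsum]
    exact add_le_add_right hwb _
  -- the main induction
  have hmain : ∀ k, 1 ≤ k → k ≤ n →
      Real.sqrt (∑ j, (Real.sqrt (pm k j) - xt k j) ^ 2) ≤
        ((k : ℝ) - 1) * (Real.sqrt 2 * δ) := by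
    intro k hk1
    induction k, hk1 using Nat.le_induction with
    | base =>
      intro _
      rw [sum_split_one (fun i => (Real.sqrt (pm 1 i) - xt 1 i) ^ 2)]
      have h := hrec_exact 0 (by omega) 0
      have e0 : xt 1 (dbl (0 : Fin (2 ^ 0))) = Real.cos (αt 0 0) := by
        rw [hxt1]
        rw [if_pos (by decide : ((dbl (0 : Fin (2 ^ 0))).val = 0))]
      have e1 : xt 1 (dbl1 (0 : Fin (2 ^ 0))) = Real.sin (αt 0 0) := by
        rw [hxt1]
        rfl
      rw [h.1, h.2, e0, e1, pm00, hαt0]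
      simp
    | succ k hk ih =>
      intro hk1n
      refine le_trans (hstep k hk hk1n) ?_
      have h2 := ih (by omega)
      push_cast
      linarith
  have hfin := hmain n (by omega) le_rfl
  rw [hpmn] at hfin
  have hbd : ((n : ℝ) - 1) * (Real.sqrt 2 * δ)
      = ((n : ℝ) - 1) * Real.sqrt 2 * Real.pi / 2 ^ (t - 1) := by
    rw [hδdef]; ring
  rw [hbd] at hfin
  refine ⟨hfin, ?_⟩
  intro ε hε htε
  have hn2 : (2:ℝ) ≤ (n:ℝ) := by exact_mod_cast hn
  have hCpos : 0 < ((n : ℝ) - 1) * Real.sqrt 2 * Real.pi :=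
    mul_pos (mul_pos (by linarith) (Real.sqrt_pos.2 two_pos)) Real.pi_pos
  have hPpos : (0:ℝ) < 2 ^ (t - 1) := by positivity
  have hceilZ : (⌈Real.logb 2 (((n : ℝ) - 1) * Real.sqrt 2 * Real.pi / ε)⌉ : ℤ)
      = (t : ℤ) - 1 := by omega
  have hceil : ((⌈Real.logb 2 (((n : ℝ) - 1) * Real.sqrt 2 * Real.pi / ε)⌉ : ℤ) : ℝ)
      = (t : ℝ) - 1 := by rw [hceilZ]; push_cast; ring
  have hlog : Real.logb 2 (((n : ℝ) - 1) * Real.sqrt 2 * Real.pi / ε) ≤ (t : ℝ) - 1 := by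
    have h := Int.le_ceil (Real.logb 2 (((n : ℝ) - 1) * Real.sqrt 2 * Real.pi / ε))
    rwa [hceil] at h
  have hd : 0 < ((n : ℝ) - 1) * Real.sqrt 2 * Real.pi / ε := div_pos hCpos hε
  have h2 : ((n : ℝ) - 1) * Real.sqrt 2 * Real.pi / ε ≤ (2:ℝ) ^ ((t : ℝ) - 1) := by
    calc ((n : ℝ) - 1) * Real.sqrt 2 * Real.pi / ε
        = (2:ℝ) ^ Real.logb 2 (((n : ℝ) - 1) * Real.sqrt 2 * Real.pi / ε) :=
          (Real.rpow_logb (by norm_num) (by norm_num) hd).symm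
      _ ≤ (2:ℝ) ^ ((t : ℝ) - 1) :=
          Real.rpow_le_rpow_of_exponent_le (by norm_num) hlog
  have hcast : (2:ℝ) ^ ((t : ℝ) - 1) = (2:ℝ) ^ (t - 1 : ℕ) := by
    rw [← Real.rpow_natCast 2 (t - 1)]
    congr 1
    rw [Nat.cast_sub ht]
    norm_num
  rw [hcast] at h2
  have hC2 : ((n : ℝ) - 1) * Real.sqrt 2 * Real.pi ≤ (2:ℝ) ^ (t - 1 : ℕ) * ε :=
    (div_le_iff₀ hε).1 h2
  have hfinal : ((n : ℝ) - 1) * Real.sqrt 2 * Real.pi / 2 ^ (t - 1) ≤ ε := by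
    rw [div_le_iff₀ hPpos]
    linarith
  exact le_trans hfin hfinal
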